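/- Let b(n) = ∑_{i=0}^{n} C(n, i)^3 (the n-th Franel number). Then for every nonnegative integer n, (n+2)^2 * b(n+2) - (7n^2 + 21n + 16) * b(n+1) - 8 * (n+1)^2 * b(n) = 0. -/

import Mathlib

/-- `b n = ∑_{i=0}^{n} C(n, i)^3` (the n-th Franel number), viewed in `ℤ`. -/
def b (n : ℕ) : ℤ :=
  ∑ i ∈ Finset.range (n + 1), ((Nat.choose n i : ℤ)) ^ 3

/-- Certificate polynomial for the WZ-style telescoping proof of the Franel
recurrence. -/
def Pp (x j : ℤ) : ℤ :=
  x^5 + 7*x^4 + 3*x^4*j + 19*x^3 + 15*x^3*j + 6*x^3*j^2 + 25*x^2 + 27*x^2*j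
    + 18*x^2*j^2 - 4*x^2*j^3 + 16*x + 21*x*j + 18*x*j^2 - 8*x*j^3
    + 4 + 6*j + 6*j^2 - 4*j^3

lemma rel (m j : ℕ) :
    ((j : ℤ) + 1) * (m.choose (j + 1) : ℤ) = ((m : ℤ) - j) * (m.choose j : ℤ) := by
  rcases lt_or_ge j m with h | h
  · have h0 := Nat.choose_succ_right_eq m j
    have h1 := congrArg (Nat.cast : ℕ → ℤ) h0
    push_cast [Nat.cast_sub h.le] at h1
    linarith
  · rcases eq_or_lt_of_le h with rfl | h'
    · rw [Nat.choose_eq_zero_of_lt (by omega), Nat.choose_self]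
      ring
    · rw [Nat.choose_eq_zero_of_lt (by omega), Nat.choose_eq_zero_of_lt h']
      ring

lemma rel2 (n j : ℕ) :
    ((n : ℤ) + 1 - j) * ((n + 1).choose j : ℤ) = ((n : ℤ) + 1) * (n.choose j : ℤ) := by
  have h1 := rel (n + 1) j
  have h2 := congrArg (Nat.cast : ℕ → ℤ) (Nat.add_one_mul_choose_eq n j)
  push_cast at h1 h2
  linarith

lemma point (n j : ℕ) :
    ((n : ℤ) + 2) ^ 2 * ((n : ℤ) + 1) ^ 3
        * (((n+1).choose j : ℤ) + ((n+1).choose (j+1) : ℤ)) ^ 3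
      - (7 * (n : ℤ) ^ 2 + 21 * n + 16) * ((n : ℤ) + 1) ^ 3 * ((n+1).choose j : ℤ) ^ 3
      - 8 * ((n : ℤ) + 1) ^ 2 * (((n : ℤ) + 1 - j) * ((n+1).choose j : ℤ)) ^ 3
    = ((n+1).choose (j+1) : ℤ) ^ 3 * Pp n (j+1)
      - ((n+1).choose j : ℤ) ^ 3 * Pp n j := by
  have h := rel (n + 1) j
  push_cast at h
  set x : ℤ := ((n+1).choose j : ℤ)
  set y : ℤ := ((n+1).choose (j+1) : ℤ)
  linear_combination (norm := (simp only [Pp]; ring1))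
    (-(((-16 : ℤ) + 14*j - 4*j^2 - 61*n + 42*n*j - 8*n*j^2 - 87*n^2
      + 42*n^2*j - 4*n^2*j^2 - 55*n^3 + 14*n^3*j - 13*n^4) * x^2
    + ((-4 : ℤ) - 6*j + 4*j^2 - 9*n - 22*n*j + 8*n*j^2 - 3*n^2 - 26*n^2*j
      + 4*n^2*j^2 + 5*n^3 - 10*n^3*j + 3*n^4) * x * y
    + ((8 : ℤ) - 2*j - 4*j^2 + 31*n + 2*n*j - 8*n*j^2 + 41*n^2 + 10*n^2*j
      - 4*n^2*j^2 + 21*n^3 + 6*n^3*j + 3*n^4) * y^2)) * h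

theorem stmt_13 (n : ℕ) :
    ((n : ℤ) + 2) ^ 2 * b (n + 2) - (7 * (n : ℤ) ^ 2 + 21 * n + 16) * b (n + 1) -
      8 * ((n : ℤ) + 1) ^ 2 * b n = 0 := by
  have hne : ((n : ℤ) + 1) ^ 3 ≠ 0 := by positivity
  -- the three sums
  have hS1 : ∑ j ∈ Finset.range (n + 2),
      (((n+1).choose j : ℤ) + ((n+1).choose (j+1) : ℤ)) ^ 3 = b (n + 2) - 1 := by
    have hb2 : b (n + 2)
        = (∑ j ∈ Finset.range (n + 2), ((n+2).choose (j+1) : ℤ) ^ 3) + 1 := by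
      rw [b, Finset.sum_range_succ']
      simp
    rw [hb2, add_sub_cancel_right]
    refine Finset.sum_congr rfl fun j _ => ?_
    have hp := congrArg (Nat.cast : ℕ → ℤ) (Nat.choose_succ_succ' (n+1) j)
    push_cast at hp
    rw [hp]
  have hS2 : ∑ j ∈ Finset.range (n + 2), ((n+1).choose j : ℤ) ^ 3 = b (n + 1) := by
    rw [b]
  have hS3 : ∑ j ∈ Finset.range (n + 2),
      (((n : ℤ) + 1 - j) * ((n+1).choose j : ℤ)) ^ 3 = ((n : ℤ) + 1) ^ 3 * b n := by
    rw [b, Finset.mul_sum, Finset.sum_range_succ]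
    have hz : (((n : ℤ) + 1 - ((n + 1 : ℕ) : ℤ)) * ((n+1).choose (n+1) : ℤ)) ^ 3 = 0 := by
      push_cast
      ring
    rw [hz, add_zero]
    refine Finset.sum_congr rfl fun j _ => ?_
    rw [rel2 n j]
    ring
  -- telescoping sum
  have tel : ∑ j ∈ Finset.range (n + 2),
      (((n : ℤ) + 2) ^ 2 * ((n : ℤ) + 1) ^ 3
          * (((n+1).choose j : ℤ) + ((n+1).choose (j+1) : ℤ)) ^ 3
        - (7 * (n : ℤ) ^ 2 + 21 * n + 16) * ((n : ℤ) + 1) ^ 3 * ((n+1).choose j : ℤ) ^ 3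
        - 8 * ((n : ℤ) + 1) ^ 2 * (((n : ℤ) + 1 - j) * ((n+1).choose j : ℤ)) ^ 3)
      = -(((n : ℤ) + 1) ^ 3 * ((n : ℤ) + 2) ^ 2) := by
    have hsum := Finset.sum_range_sub
      (f := fun j => ((n+1).choose j : ℤ) ^ 3 * Pp n j) (n + 2)
    push_cast at hsum
    rw [Finset.sum_congr rfl fun j _ => point n j, hsum,
      Nat.choose_eq_zero_of_lt (by omega), Nat.choose_zero_right]
    push_cast [Pp]
    ring
  -- split the telescoping sum into the three pieces
  have split : ∑ j ∈ Finset.range (n + 2),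
      (((n : ℤ) + 2) ^ 2 * ((n : ℤ) + 1) ^ 3
          * (((n+1).choose j : ℤ) + ((n+1).choose (j+1) : ℤ)) ^ 3
        - (7 * (n : ℤ) ^ 2 + 21 * n + 16) * ((n : ℤ) + 1) ^ 3 * ((n+1).choose j : ℤ) ^ 3
        - 8 * ((n : ℤ) + 1) ^ 2 * (((n : ℤ) + 1 - j) * ((n+1).choose j : ℤ)) ^ 3)
      = ((n : ℤ) + 2) ^ 2 * ((n : ℤ) + 1) ^ 3 *
          (∑ j ∈ Finset.range (n + 2),
            (((n+1).choose j : ℤ) + ((n+1).choose (j+1) : ℤ)) ^ 3)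
        - (7 * (n : ℤ) ^ 2 + 21 * n + 16) * ((n : ℤ) + 1) ^ 3 *
          (∑ j ∈ Finset.range (n + 2), ((n+1).choose j : ℤ) ^ 3)
        - 8 * ((n : ℤ) + 1) ^ 2 *
          (∑ j ∈ Finset.range (n + 2),
            (((n : ℤ) + 1 - j) * ((n+1).choose j : ℤ)) ^ 3) := by
    rw [Finset.sum_sub_distrib, Finset.sum_sub_distrib, ← Finset.mul_sum, ← Finset.mul_sum,
      ← Finset.mul_sum]
  have key : ((n : ℤ) + 1) ^ 3 *
      (((n : ℤ) + 2) ^ 2 * b (n + 2) - (7 * (n : ℤ) ^ 2 + 21 * n + 16) * b (n + 1) -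
        8 * ((n : ℤ) + 1) ^ 2 * b n) = 0 := by
    linear_combination tel - split - ((n : ℤ) + 2) ^ 2 * ((n : ℤ) + 1) ^ 3 * hS1
      + (7 * (n : ℤ) ^ 2 + 21 * n + 16) * ((n : ℤ) + 1) ^ 3 * hS2
      + 8 * ((n : ℤ) + 1) ^ 2 * hS3
  rcases mul_eq_zero.mp key with h | h
  · exact absurd h hne
  · exact h
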